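/- With C, t, T, index_T, F = Hom_C(t,−) as above: if c' → t_c →τ c →δ Σc' is a triangle in C with t_c ∈ T and Fδ = 0, then [t_c] = index_T(c') + index_T(c) in K_0^{sp}(T). -/

import Mathlib

open CategoryTheory Category Limits Pretriangulated Opposite

universe v u

section Defs

variable {C : Type u} [Category.{v} C]

section Add

variable [Preadditive C] [HasFiniteBiproducts C]

/-- `x` lies in `add t`: it is a direct summand of a finite direct sum of copies of `t`. -/
def inAdd (t x : C) : Prop :=
  ∃ (n : ℕ) (i : x ⟶ ⨁ (fun _ : Fin n => t)) (r : ⨁ (fun _ : Fin n => t) ⟶ x),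
    i ≫ r = 𝟙 x

end Add

/-- A morphism lies in the radical of the category. -/
def radMor [Preadditive C] {x y : C} (f : x ⟶ y) : Prop :=
  ∀ g : y ⟶ x, IsIso (𝟙 x - f ≫ g)

/-- An object is indecomposable. -/
def IndecObj [Preadditive C] [HasBinaryBiproducts C] (s : C) : Prop :=
  ¬ IsZero s ∧ ∀ (a b : C), (s ≅ a ⊞ b) → IsZero a ∨ IsZero b

/-- Every object has a precover by an object of `Tset` (contravariant finiteness). -/
def IsPrecovering (Tset : Set C) : Prop :=
  ∀ c : C, ∃ (x : C) (f : x ⟶ c), x ∈ Tset ∧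
    ∀ x' ∈ Tset, ∀ g : x' ⟶ c, ∃ h : x' ⟶ x, h ≫ f = g

/-- Every object has a preenvelope by an object of `Tset` (covariant finiteness). -/
def IsPreenveloping (Tset : Set C) : Prop :=
  ∀ c : C, ∃ (x : C) (f : c ⟶ x), x ∈ Tset ∧
    ∀ x' ∈ Tset, ∀ g : c ⟶ x', ∃ h : x ⟶ x', f ≫ h = g

/-- `f : x ⟶ c` is a `Tset`-cover: a right minimal `Tset`-approximation. -/
def IsTCover (Tset : Set C) {x c : C} (f : x ⟶ c) : Prop :=
  x ∈ Tset ∧ (∀ x' ∈ Tset, ∀ g : x' ⟶ c, ∃ h : x' ⟶ x, h ≫ f = g) ∧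
    ∀ φ : x ⟶ x, φ ≫ f = f → IsIso φ

section Shift

variable [Preadditive C] [HasShift C ℤ]

/-- `Tset` is an `n`-cluster tilting subcategory: it is functorially finite and coincides with
both `Ext^{1..n-1}`-orthogonals of itself. -/
structure IsClusterTiltingSub (n : ℕ) (Tset : Set C) : Prop where
  precovering : IsPrecovering Tset
  preenveloping : IsPreenveloping Tset
  mem_iff_ext₁ : ∀ c : C, c ∈ Tset ↔
    ∀ i : ℕ, 1 ≤ i → i ≤ n - 1 → ∀ x ∈ Tset, ∀ f : x ⟶ c⟦(i : ℤ)⟧, f = 0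
  mem_iff_ext₂ : ∀ c : C, c ∈ Tset ↔
    ∀ i : ℕ, 1 ≤ i → i ≤ n - 1 → ∀ x ∈ Tset, ∀ f : c ⟶ x⟦(i : ℤ)⟧, f = 0

/-- `t` is an `n`-cluster tilting object: `add t` is an `n`-cluster tilting subcategory. -/
def IsClusterTiltingObj [HasFiniteBiproducts C] (n : ℕ) (t : C) : Prop :=
  IsClusterTiltingSub n {x : C | inAdd t x}

end Shift

section Tri

variable [Preadditive C] [HasZeroObject C] [HasShift C ℤ]
  [∀ n : ℤ, (shiftFunctor C n).Additive] [Pretriangulated C]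

/-- The Iyama–Yoshino star operation `X * Y` on full subcategories. -/
def star (X Y : Set C) : Set C :=
  {c | ∃ (x y : C) (f : x ⟶ c) (g : c ⟶ y) (h : y ⟶ x⟦(1 : ℤ)⟧),
    Triangle.mk f g h ∈ (distTriang C) ∧ x ∈ X ∧ y ∈ Y}

/-- Iterated star operation `X₁ * X₂ * ⋯ * Xₘ`. -/
def starList : List (Set C) → Set C
  | [] => {c | IsZero c}
  | [X] => X
  | X :: Y :: L => star X (starList (Y :: L))

/-- A tower of triangles connecting the objects `cobj (m+1), cobj m, …, cobj 1, cobj 0`: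
triangles `w (i+1) ⟶ cobj (i+1) ⟶ w i ⟶ (w (i+1))⟦1⟧` for `i < m`, with
`w 0 = cobj 0` and `w m = cobj (m+1)`. -/
structure TriTower (m : ℕ) (cobj : ℕ → C) where
  w : ℕ → C
  fmor : ∀ i : ℕ, w (i + 1) ⟶ cobj (i + 1)
  gmor : ∀ i : ℕ, cobj (i + 1) ⟶ w i
  hmor : ∀ i : ℕ, w i ⟶ (w (i + 1))⟦(1 : ℤ)⟧
  mem : ∀ i < m, Triangle.mk (fmor i) (gmor i) (hmor i) ∈ distTriang C
  w_zero : w 0 = cobj 0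
  w_top : w m = cobj (m + 1)

/-- The composite `w 0 ⟶ Σʲ (w j)` of the (suitably shifted) wavy morphisms of a tower. -/
noncomputable def towerComp {m : ℕ} {cobj : ℕ → C} (tw : TriTower m cobj) :
    ∀ j : ℕ, (tw.w 0 ⟶ (tw.w j)⟦(j : ℤ)⟧)
  | 0 => (shiftFunctorZero' C ((0 : ℕ) : ℤ) (by simp)).inv.app (tw.w 0)
  | (j + 1) => towerComp tw j ≫ (shiftFunctor C (j : ℤ)).map (tw.hmor j) ≫
      (shiftFunctorAdd' C (1 : ℤ) (j : ℤ) ((j + 1 : ℕ) : ℤ) (by push_cast; ring)).inv.app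
        (tw.w (j + 1))

/-- The full composite `cobj 0 ⟶ Σᵐ (cobj (m+1))` of the wavy morphisms of a tower. -/
noncomputable def towerGamma {m : ℕ} {cobj : ℕ → C} (tw : TriTower m cobj) :
    cobj 0 ⟶ (cobj (m + 1))⟦(m : ℤ)⟧ :=
  eqToHom tw.w_zero.symm ≫ towerComp tw m ≫ eqToHom (by rw [tw.w_top])

/-- `cls` is constant on isomorphism classes of objects of `Tset` and additive on biproducts
of objects of `Tset`; quantifying over all such `cls` encodes identities in the split
Grothendieck group `K₀^{sp}(Tset)`. -/
def IsAddOn [HasFiniteBiproducts C] (Tset : Set C) {G : Type*} [AddCommGroup G]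
    (cls : C → G) : Prop :=
  (∀ x y : C, x ∈ Tset → y ∈ Tset → Nonempty (x ≅ y) → cls x = cls y) ∧
  (∀ x y : C, x ∈ Tset → y ∈ Tset → cls (x ⊞ y) = cls x + cls y)

/-- `ind` is the triangulated index with respect to `Tset`: for each `c` there is a tower of
triangles built from `Tset`-covers, and `ind c` is the alternating sum of the classes of its
`Tset`-objects. -/
def IsIndex [HasFiniteBiproducts C] (n : ℕ) (Tset : Set C) {G : Type*} [AddCommGroup G]
    (cls ind : C → G) : Prop :=
  ∀ c : C, ∃ (cobj : ℕ → C) (tw : TriTower (n - 1) cobj),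
    cobj 0 = c ∧ (∀ i < n - 1, IsTCover Tset (tw.gmor i)) ∧ cobj n ∈ Tset ∧
    ind c = ∑ i ∈ Finset.range n, ((-1 : ℤ) ^ i) • cls (cobj (i + 1))

/-- `ind` is the `(d+2)`-angulated index with respect to `Tset`: for each `s ∈ Sset` there is a
`(d+2)`-angle (encoded as a tower of triangles) `t_d → ⋯ → t_0 → s → Σ^d t_d` with `t_i ∈ Tset`
and radical maps, and `ind s` is the alternating sum of the classes of the `t_i`. -/
def IsHigherIndex [HasFiniteBiproducts C] (d : ℕ) (Tset Sset : Set C) {G : Type*}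
    [AddCommGroup G] (cls ind : C → G) : Prop :=
  ∀ s ∈ Sset, ∃ (cobj : ℕ → C) (tw : TriTower d cobj),
    cobj 0 = s ∧ (∀ i, 1 ≤ i → i ≤ d + 1 → cobj i ∈ Tset) ∧
    (∀ j : ℕ, j + 2 ≤ d → radMor (tw.gmor (j + 1) ≫ tw.fmor j)) ∧
    (∀ j : ℕ, (hj : j + 1 = d) →
      radMor ((eqToHom (show cobj (d + 1) = tw.w (j + 1) by rw [hj, tw.w_top]) :
        cobj (d + 1) ⟶ tw.w (j + 1)) ≫ tw.fmor j)) ∧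
    ind s = ∑ i ∈ Finset.range (d + 1), ((-1 : ℤ) ^ i) • cls (cobj (i + 1))

/-- `t` is an Oppermann–Thomas cluster tilting object of the `(d+2)`-angulated category `Sset`:
`Hom(t, Σ^d t) = 0`, and every `s ∈ Sset` admits a `(d+2)`-angle (encoded as a tower)
`t_d → ⋯ → t_0 → s → Σ^d t_d` with all `t_i ∈ add t`. -/
def IsOTClusterTilting [HasFiniteBiproducts C] (d : ℕ) (Sset : Set C) (t : C) : Prop :=
  t ∈ Sset ∧ (∀ f : t ⟶ t⟦(d : ℤ)⟧, f = 0) ∧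
    ∀ s ∈ Sset, ∃ (cobj : ℕ → C) (tw : TriTower d cobj),
      cobj 0 = s ∧ ∀ i, 1 ≤ i → i ≤ d + 1 → inAdd t (cobj i)

/-- A `N`-Calabi–Yau structure on `Sset`: a bifunctorial perfect pairing
`Hom(x,y) × Hom(y, x⟦N⟧) → k`, encoding natural isomorphisms `Hom(x,y) ≅ D Hom(y, x⟦N⟧)`. -/
structure CYData (k : Type*) [Field k] [Linear k C] (Sset : Set C) (N : ℤ) where
  pair : ∀ x y : C, (x ⟶ y) → (y ⟶ x⟦N⟧) → k
  add_left : ∀ x y, x ∈ Sset → y ∈ Sset → ∀ (f f' : x ⟶ y) (g : y ⟶ x⟦N⟧),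
    pair x y (f + f') g = pair x y f g + pair x y f' g
  add_right : ∀ x y, x ∈ Sset → y ∈ Sset → ∀ (f : x ⟶ y) (g g' : y ⟶ x⟦N⟧),
    pair x y f (g + g') = pair x y f g + pair x y f g'
  smul_left : ∀ x y, x ∈ Sset → y ∈ Sset → ∀ (a : k) (f : x ⟶ y) (g : y ⟶ x⟦N⟧),
    pair x y (a • f) g = a * pair x y f g
  smul_right : ∀ x y, x ∈ Sset → y ∈ Sset → ∀ (a : k) (f : x ⟶ y) (g : y ⟶ x⟦N⟧),
    pair x y f (a • g) = a * pair x y f g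
  assoc : ∀ x y z, x ∈ Sset → y ∈ Sset → z ∈ Sset →
    ∀ (f : x ⟶ y) (g : y ⟶ z) (h : z ⟶ x⟦N⟧),
    pair x z (f ≫ g) h = pair x y f (g ≫ h)
  nondeg_left : ∀ x y, x ∈ Sset → y ∈ Sset → ∀ f : x ⟶ y,
    (∀ g : y ⟶ x⟦N⟧, pair x y f g = 0) → f = 0
  nondeg_right : ∀ x y, x ∈ Sset → y ∈ Sset → ∀ g : y ⟶ x⟦N⟧,
    (∀ f : x ⟶ y, pair x y f g = 0) → g = 0

end Tri

end Defs

variable {C : Type u} [Category.{v} C]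


section Aux

variable {C : Type u} [Category.{v} C]

section AuxAdd

variable [Preadditive C] [HasZeroObject C] [HasShift C ℤ]
  [∀ n : ℤ, (shiftFunctor C n).Additive] [Pretriangulated C]
  [HasFiniteBiproducts C]

attribute [local instance] hasBinaryBiproducts_of_finite_biproducts

lemma inAdd_of_retract {t x y : C} (i : y ⟶ x) (r : x ⟶ y) (hir : i ≫ r = 𝟙 y)
    (hx : inAdd t x) : inAdd t y := by
  obtain ⟨m, ix, rx, h⟩ := hx
  refine ⟨m, i ≫ ix, rx ≫ r, ?_⟩
  rw [Category.assoc, ← Category.assoc ix, h, Category.id_comp, hir]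

lemma inAdd_of_iso {t x y : C} (e : x ≅ y) (hx : inAdd t x) : inAdd t y :=
  inAdd_of_retract e.inv e.hom (by simp) hx

lemma inAdd_zero {t x : C} (hx : IsZero x) : inAdd t x :=
  ⟨0, 0, 0, by rw [zero_comp]; exact (hx.eq_of_src _ _)⟩

lemma inAdd_biprod {t x y : C} (hx : inAdd t x) (hy : inAdd t y) : inAdd t (x ⊞ y) := by
  obtain ⟨m, ix, rx, hxr⟩ := hx
  obtain ⟨m', iy, ry, hyr⟩ := hy
  let f₁ : (⨁ fun _ : Fin m => t) ⟶ (⨁ fun _ : Fin (m + m') => t) :=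
    biproduct.lift (fun k => if h : (k : ℕ) < m then biproduct.π (fun _ : Fin m => t) ⟨k, h⟩
      else 0)
  let g₁ : (⨁ fun _ : Fin (m + m') => t) ⟶ (⨁ fun _ : Fin m => t) :=
    biproduct.lift (fun j => biproduct.π (fun _ : Fin (m + m') => t) (Fin.castAdd m' j))
  let f₂ : (⨁ fun _ : Fin m' => t) ⟶ (⨁ fun _ : Fin (m + m') => t) :=
    biproduct.lift (fun k => if h : (k : ℕ) < m then 0
      else biproduct.π (fun _ : Fin m' => t) ⟨(k : ℕ) - m, by omega⟩)
  let g₂ : (⨁ fun _ : Fin (m + m') => t) ⟶ (⨁ fun _ : Fin m' => t) :=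
    biproduct.lift (fun j => biproduct.π (fun _ : Fin (m + m') => t) (Fin.natAdd m j))
  have h11 : f₁ ≫ g₁ = 𝟙 _ := by
    apply biproduct.hom_ext
    intro j
    simp only [Category.assoc, biproduct.lift_π, Category.id_comp, f₁, g₁]
    rw [dif_pos (show ((Fin.castAdd m' j : Fin (m + m')) : ℕ) < m by simp [j.isLt])]
    congr 1
  have h12 : f₁ ≫ g₂ = 0 := by
    apply biproduct.hom_ext
    intro j
    simp only [Category.assoc, biproduct.lift_π, zero_comp, f₁, g₂]
    rw [dif_neg (show ¬ ((Fin.natAdd m j : Fin (m + m')) : ℕ) < m by simp)]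
  have h21 : f₂ ≫ g₁ = 0 := by
    apply biproduct.hom_ext
    intro j
    simp only [Category.assoc, biproduct.lift_π, zero_comp, f₂, g₁]
    rw [dif_pos (show ((Fin.castAdd m' j : Fin (m + m')) : ℕ) < m by simp [j.isLt])]
  have h22 : f₂ ≫ g₂ = 𝟙 _ := by
    apply biproduct.hom_ext
    intro j
    simp only [Category.assoc, biproduct.lift_π, Category.id_comp, f₂, g₂]
    rw [dif_neg (show ¬ ((Fin.natAdd m j : Fin (m + m')) : ℕ) < m by simp)]
    congr 1
    exact Fin.ext (by simp)
  refine ⟨m + m', biprod.desc (ix ≫ f₁) (iy ≫ f₂), biprod.lift (g₁ ≫ rx) (g₂ ≫ ry), ?_⟩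
  apply biprod.hom_ext'
  · apply biprod.hom_ext
    · simp only [biprod.inl_desc_assoc, Category.assoc, biprod.lift_fst, Category.comp_id,
        biprod.inl_fst]
      rw [← Category.assoc f₁, h11, Category.id_comp, hxr]
    · simp only [biprod.inl_desc_assoc, Category.assoc, biprod.lift_snd, Category.comp_id,
        biprod.inl_snd]
      rw [← Category.assoc f₁, h12, zero_comp, comp_zero]
  · apply biprod.hom_ext
    · simp only [biprod.inr_desc_assoc, Category.assoc, biprod.lift_fst, Category.comp_id,
        biprod.inr_fst]
      rw [← Category.assoc f₂, h21, zero_comp, comp_zero]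
    · simp only [biprod.inr_desc_assoc, Category.assoc, biprod.lift_snd, Category.comp_id,
        biprod.inr_snd]
      rw [← Category.assoc f₂, h22, Category.id_comp, hyr]

lemma cls_eq_of_iso {t : C} {G : Type*} [AddCommGroup G] {cls : C → G}
    (hcls : IsAddOn {x : C | inAdd t x} cls) {x y : C} (hx : inAdd t x) (hy : inAdd t y)
    (e : x ≅ y) : cls x = cls y :=
  hcls.1 x y hx hy ⟨e⟩

lemma cls_isZero {t : C} {G : Type*} [AddCommGroup G] {cls : C → G}
    (hcls : IsAddOn {x : C | inAdd t x} cls) {x : C} (hx : IsZero x) : cls x = 0 := by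
  have h1 : inAdd t x := inAdd_zero hx
  have h2 : inAdd t (x ⊞ x) := inAdd_biprod h1 h1
  have e : x ⊞ x ≅ x := (isoBiprodZero hx).symm
  have h3 : cls x = cls x + cls x := by
    rw [← hcls.2 x x h1 h1]
    exact (cls_eq_of_iso hcls h2 h1 e).symm
  have h4 : cls x + cls x = cls x + 0 := by rw [add_zero]; exact h3.symm
  exact add_left_cancel h4

end AuxAdd

section AuxTri

variable [Preadditive C] [HasZeroObject C] [HasShift C ℤ]
  [∀ n : ℤ, (shiftFunctor C n).Additive] [Pretriangulated C]
  [HasFiniteBiproducts C]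

attribute [local instance] hasBinaryBiproducts_of_finite_biproducts

open ZeroObject

lemma isTCover_comp_iso {Tset : Set C} {x c c' : C} {f : x ⟶ c} (hf : IsTCover Tset f)
    (e : c ≅ c') : IsTCover Tset (f ≫ e.hom) := by
  obtain ⟨h1, h2, h3⟩ := hf
  refine ⟨h1, ?_, ?_⟩
  · intro x' hx' g
    obtain ⟨h, hh⟩ := h2 x' hx' (g ≫ e.inv)
    exact ⟨h, by rw [← Category.assoc, hh, Category.assoc, e.inv_hom_id, Category.comp_id]⟩
  · intro φ hφ
    apply h3
    rw [← Category.assoc] at hφ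
    exact (cancel_mono e.hom).1 hφ

lemma isIso_of_isTCover_self {t s y : C} {f : s ⟶ y}
    (hf : IsTCover {x : C | inAdd t x} f) (hy : inAdd t y) : IsIso f := by
  obtain ⟨hs, hpre, hmin⟩ := hf
  obtain ⟨h, hh⟩ := hpre y hy (𝟙 y)
  have h1 : IsIso (f ≫ h) := hmin _ (by rw [Category.assoc, hh, Category.comp_id])
  have e1 : (f ≫ h) ≫ f ≫ h = (f ≫ h) ≫ 𝟙 s := by
    rw [Category.comp_id, Category.assoc, ← Category.assoc h f, hh, Category.id_comp]
  have h2 : f ≫ h = 𝟙 s := (cancel_epi (f ≫ h)).1 e1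
  exact ⟨h, h2, hh⟩

lemma split_cover_precover {t t₁ c x : C} (f : t₁ ⟶ c)
    (hf : IsTCover {x : C | inAdd t x} f) (hx : inAdd t x) (g : x ⟶ c)
    (hg : ∀ s : C, inAdd t s → ∀ u : s ⟶ c, ∃ h : s ⟶ x, h ≫ g = u)
    [IsIdempotentComplete C] :
    ∃ (z : C), inAdd t z ∧ ∃ (ψ : x ≅ t₁ ⊞ z), ψ.hom ≫ biprod.desc f 0 = g := by
  obtain ⟨ht₁, hpre, hmin⟩ := hf
  obtain ⟨u, hu⟩ := hpre x hx g
  obtain ⟨v, hv⟩ := hg t₁ ht₁ f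
  have hφiso : IsIso (v ≫ u) := hmin _ (by rw [Category.assoc, hu, hv])
  set φ : t₁ ⟶ t₁ := v ≫ u with hφdef
  have hφf : φ ≫ f = f := by rw [hφdef, Category.assoc, hu, hv]
  have hinvf : inv φ ≫ f = f := by
    rw [← hφf, ← Category.assoc, IsIso.inv_hom_id, Category.id_comp, hφf]
  have hvu1 : v ≫ u ≫ inv φ ≫ v = v := by
    rw [show v ≫ u ≫ inv φ ≫ v = (v ≫ u) ≫ inv φ ≫ v by simp only [Category.assoc]]
    exact IsIso.hom_inv_id_assoc _ _
  have hφ1 : v ≫ u ≫ inv φ = 𝟙 t₁ := by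
    rw [← Category.assoc]; exact IsIso.hom_inv_id φ
  set e : x ⟶ x := u ≫ inv φ ≫ v with hedef
  have hee : e ≫ e = e := by
    rw [hedef]
    simp only [Category.assoc]
    rw [hvu1]
  set p : x ⟶ x := 𝟙 x - e with hpdef
  have hpp : p ≫ p = p := by
    rw [hpdef]
    simp only [Preadditive.sub_comp, Preadditive.comp_sub, Category.id_comp, Category.comp_id,
      hee]
    abel
  obtain ⟨z, i, pr, hip, hpi⟩ := IsIdempotentComplete.idempotents_split x p hpp
  have hzT : inAdd t z := inAdd_of_retract i pr hip hx
  have hve : v ≫ e = v := by rw [hedef]; exact hvu1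
  have hvp : v ≫ p = 0 := by rw [hpdef, Preadditive.comp_sub, Category.comp_id, hve, sub_self]
  have hvpr : v ≫ pr = 0 := by
    have hvpi : (v ≫ pr) ≫ i = 0 := by rw [Category.assoc, hpi]; exact hvp
    calc v ≫ pr = ((v ≫ pr) ≫ i) ≫ pr := by rw [Category.assoc, hip, Category.comp_id]
    _ = 0 := by rw [hvpi, zero_comp]
  have hipr : i ≫ p = i := by rw [← hpi, ← Category.assoc, hip, Category.id_comp]
  have hie : i ≫ e = 0 := by
    have := hipr
    rw [hpdef, Preadditive.comp_sub, Category.comp_id] at this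
    exact sub_eq_self.mp this
  have hiu : i ≫ u ≫ inv φ = 0 := by
    calc i ≫ u ≫ inv φ = i ≫ u ≫ inv φ ≫ (v ≫ u ≫ inv φ) := by
          rw [hφ1, Category.comp_id]
    _ = (i ≫ e) ≫ u ≫ inv φ := by rw [hedef]; simp only [Category.assoc]
    _ = 0 := by rw [hie, zero_comp]
  refine ⟨z, hzT, ⟨biprod.lift (u ≫ inv φ) pr, biprod.desc v i, ?_, ?_⟩, ?_⟩
  · rw [biprod.lift_desc, hpi, hpdef]
    rw [show (u ≫ inv φ) ≫ v = e by rw [hedef, Category.assoc]]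
    abel
  · apply biprod.hom_ext'
    · apply biprod.hom_ext
      · simp only [biprod.inl_desc_assoc, Category.assoc, biprod.lift_fst, Category.comp_id,
          biprod.inl_fst]
        rw [← Category.assoc]
        exact IsIso.hom_inv_id φ
      · simp only [biprod.inl_desc_assoc, Category.assoc, biprod.lift_snd, Category.comp_id,
          biprod.inl_snd]
        exact hvpr
    · apply biprod.hom_ext
      · simp only [biprod.inr_desc_assoc, Category.assoc, biprod.lift_fst, Category.comp_id,
          biprod.inr_fst]
        exact hiu
      · simp only [biprod.inr_desc_assoc, Category.assoc, biprod.lift_snd, Category.comp_id,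
          biprod.inr_snd]
        exact hip
  · rw [biprod.lift_desc, comp_zero, add_zero, Category.assoc, hinvf, hu]

/-- Binary product of two Bool-indexed objects as a categorical product. -/
noncomputable def biprodPiIso (f : Bool → C) : (f true ⊞ f false) ≅ ∏ᶜ f where
  hom := Pi.lift (fun b => Bool.rec (motive := fun b => f true ⊞ f false ⟶ f b)
    biprod.snd biprod.fst b)
  inv := biprod.lift (Pi.π f true) (Pi.π f false)
  hom_inv_id := by apply biprod.hom_ext <;> simp
  inv_hom_id := by
    apply Pi.hom_ext
    rintro (_ | _) <;> simp

@[simp] lemma biprodPiIso_hom_true (f : Bool → C) :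
    (biprodPiIso f).hom ≫ Pi.π f true = biprod.fst := by simp [biprodPiIso]

@[simp] lemma biprodPiIso_hom_false (f : Bool → C) :
    (biprodPiIso f).hom ≫ Pi.π f false = biprod.snd := by simp [biprodPiIso]

lemma biprodTriangle_dist (T₁ T₂ : Triangle C) (h₁ : T₁ ∈ distTriang C)
    (h₂ : T₂ ∈ distTriang C) :
    Triangle.mk (biprod.map T₁.mor₁ T₂.mor₁) (biprod.map T₁.mor₂ T₂.mor₂)
      (biprod.desc (T₁.mor₃ ≫ (shiftFunctor C (1 : ℤ)).map biprod.inl)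
        (T₂.mor₃ ≫ (shiftFunctor C (1 : ℤ)).map biprod.inr)) ∈ distTriang C := by
  let Tf : Bool → Triangle C := fun b => Bool.rec (motive := fun _ => Triangle C) T₂ T₁ b
  have hprod := productTriangle_distinguished Tf (by rintro (_ | _) <;> assumption)
  refine isomorphic_distinguished _ hprod _ ?_
  refine Triangle.isoMk _ _ (biprodPiIso (fun b => (Tf b).obj₁))
    (biprodPiIso (fun b => (Tf b).obj₂)) (biprodPiIso (fun b => (Tf b).obj₃)) ?_ ?_ ?_
  · apply Pi.hom_ext
    rintro (_ | _) <;>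
      simp [productTriangle, Tf, biprodPiIso, Triangle.mk]
  · apply Pi.hom_ext
    rintro (_ | _) <;>
      simp [productTriangle, Tf, biprodPiIso, Triangle.mk]
  · refine (cancel_mono (piComparison (shiftFunctor C (1 : ℤ)) (fun b => (Tf b).obj₁))).1 ?_
    simp only [productTriangle, Triangle.mk_mor₃, Category.assoc, IsIso.inv_hom_id,
      Category.comp_id]
    apply Pi.hom_ext
    rintro (_ | _) <;>
    · apply biprod.hom_ext' <;>
        simp [piComparison_comp_π, ← Functor.map_comp, Tf, biprodPiIso, Triangle.mk]

lemma dist_zero_id (z : C) :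
    Triangle.mk (0 : (0 : C) ⟶ z) (𝟙 z) (0 : z ⟶ ((0 : C)⟦(1 : ℤ)⟧)) ∈ distTriang C := by
  refine isomorphic_distinguished _
    (inv_rot_of_distTriang _ (contractible_distinguished z)) _ ?_
  have hz' : IsZero (((contractibleTriangle z).obj₃)⟦(-1 : ℤ)⟧) :=
    (shiftFunctor C (-1 : ℤ)).map_isZero (isZero_zero C)
  refine Triangle.isoMk _ _ ((isZero_zero C).iso hz') (Iso.refl z) (Iso.refl z) ?_ ?_ ?_
  · exact (isZero_zero C).eq_of_src _ _
  · simp [Triangle.invRotate]; rfl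
  · exact (((shiftFunctor C (1 : ℤ)).map_isZero hz').eq_of_tgt _ _)

lemma iso_obj₁ {T₁ T₂ : Triangle C} (h₁ : T₁ ∈ distTriang C) (h₂ : T₂ ∈ distTriang C)
    (e₂ : T₁.obj₂ ≅ T₂.obj₂) (e₃ : T₁.obj₃ ≅ T₂.obj₃)
    (comm : T₁.mor₂ ≫ e₃.hom = e₂.hom ≫ T₂.mor₂) : Nonempty (T₁.obj₁ ≅ T₂.obj₁) := by
  have e := isoTriangleOfIso₁₂ _ _ (rot_of_distTriang _ h₁) (rot_of_distTriang _ h₂) e₂ e₃ comm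
  exact ⟨(shiftFunctor C (1 : ℤ)).preimageIso (Triangle.π₃.mapIso e)⟩

end AuxTri

section AuxMain

variable [Preadditive C] [HasZeroObject C] [HasShift C ℤ]
  [∀ n : ℤ, (shiftFunctor C n).Additive] [Pretriangulated C]
  [HasFiniteBiproducts C] [IsIdempotentComplete C]

attribute [local instance] hasBinaryBiproducts_of_finite_biproducts

open ZeroObject

/-- A cover tower of length `m` over an object isomorphic to `c`. -/
structure GT (t : C) (m : ℕ) (c : C) where
  cobj : ℕ → C
  tw : TriTower m cobj
  base : cobj 0 ≅ c
  covers : ∀ i < m, IsTCover {x : C | inAdd t x} (tw.gmor i)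
  top : inAdd t (cobj (m + 1))

/-- The alternating sum of classes in a tower. -/
def Ssum {G : Type*} [AddCommGroup G] (cls : C → G) (m : ℕ) (cobj : ℕ → C) : G :=
  ∑ i ∈ Finset.range (m + 1), ((-1 : ℤ) ^ i) • cls (cobj (i + 1))

lemma Ssum_succ {G : Type*} [AddCommGroup G] (cls : C → G) (q : ℕ) (cobj cobj' : ℕ → C)
    (h : ∀ i, cobj' (i + 1) = cobj (i + 2)) :
    Ssum cls (q + 1) cobj = cls (cobj 1) - Ssum cls q cobj' := by
  rw [Ssum, Ssum, Finset.sum_range_succ' _ (q + 1)]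
  have e2 : ∀ i, ((-1 : ℤ) ^ (i + 1)) • cls (cobj (i + 1 + 1))
      = -(((-1 : ℤ) ^ i) • cls (cobj' (i + 1))) := by
    intro i
    rw [h i, pow_succ, mul_smul]
    rw [show ((-1 : ℤ) • cls (cobj (i + 2))) = -cls (cobj (i + 2)) from neg_one_smul _ _,
      smul_neg]
  rw [Finset.sum_congr rfl (fun i _ => e2 i), Finset.sum_neg_distrib, pow_zero, one_smul]
  abel

def GT.tail {t : C} {m : ℕ} {c : C} (g : GT t (m + 1) c) : GT t m (g.tw.w 1) where
  cobj := fun i => match i with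
    | 0 => g.tw.w 1
    | (k + 1) => g.cobj (k + 2)
  tw :=
    { w := fun i => g.tw.w (i + 1)
      fmor := fun i => g.tw.fmor (i + 1)
      gmor := fun i => g.tw.gmor (i + 1)
      hmor := fun i => g.tw.hmor (i + 1)
      mem := fun i hi => g.tw.mem (i + 1) (by omega)
      w_zero := rfl
      w_top := g.tw.w_top }
  base := Iso.refl _
  covers := fun i hi => g.covers (i + 1) (by omega)
  top := g.top

def GT.ofIso {t : C} {m : ℕ} {c c' : C} (g : GT t m c) (e : c ≅ c') : GT t m c' :=
  { g with base := g.base ≪≫ e }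

lemma lemC {t : C} {G : Type*} [AddCommGroup G] {cls : C → G}
    (hcls : IsAddOn {x : C | inAdd t x} cls) :
    ∀ (q : ℕ) (y : C) (g : GT t q y), inAdd t y → Ssum cls q g.cobj = cls y := by
  intro q
  induction q with
  | zero =>
    intro y g hy
    rw [Ssum, Finset.sum_range_one, pow_zero, one_smul]
    exact cls_eq_of_iso hcls g.top hy
      (eqToIso (g.tw.w_top.symm.trans g.tw.w_zero) ≪≫ g.base)
  | succ q ih =>
    intro y g hy
    have mem0 := g.tw.mem 0 (Nat.succ_pos q)
    have cov0 := g.covers 0 (Nat.succ_pos q)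
    set E : g.tw.w 0 ≅ y := eqToIso g.tw.w_zero ≪≫ g.base with hE
    have covE : IsTCover {x : C | inAdd t x} (g.tw.gmor 0 ≫ E.hom) := isTCover_comp_iso cov0 E
    have hiso : IsIso (g.tw.gmor 0 ≫ E.hom) := isIso_of_isTCover_self covE hy
    have hiso2 : IsIso (g.tw.gmor 0) := by
      have : g.tw.gmor 0 = (g.tw.gmor 0 ≫ E.hom) ≫ E.inv := by simp
      rw [this]; infer_instance
    have hz1 : IsZero (g.tw.w 1) :=
      Triangle.isZero₁_of_isIso₂ _ mem0 hiso2
    have htail := ih (g.tw.w 1) g.tail (inAdd_zero hz1)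
    have hc1 : cls (g.cobj 1) = cls y :=
      cls_eq_of_iso hcls cov0.1 hy (asIso (g.tw.gmor 0 ≫ E.hom))
    rw [Ssum_succ cls q g.cobj g.tail.cobj (fun i => rfl), htail, cls_isZero hcls hz1,
      sub_zero, hc1]

lemma lemSplit {t : C} {y x c : C} {a : y ⟶ x} {g : x ⟶ c} {δ : c ⟶ y⟦(1 : ℤ)⟧}
    (htri : Triangle.mk a g δ ∈ distTriang C) (hx : inAdd t x)
    (hg : ∀ s : C, inAdd t s → ∀ u : s ⟶ c, ∃ h : s ⟶ x, h ≫ g = u)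
    {m : ℕ} (Gc : GT t (m + 1) c) :
    ∃ (z : C), inAdd t z ∧ Nonempty (x ≅ Gc.cobj 1 ⊞ z) ∧
      Nonempty (y ≅ Gc.tw.w 1 ⊞ z) := by
  set E : Gc.tw.w 0 ≅ c := eqToIso Gc.tw.w_zero ≪≫ Gc.base with hE
  set f : Gc.cobj 1 ⟶ c := Gc.tw.gmor 0 ≫ E.hom with hfdef
  have hf : IsTCover {x : C | inAdd t x} f := isTCover_comp_iso (Gc.covers 0 (Nat.succ_pos m)) E
  obtain ⟨z, hz, ψ, hψ⟩ := split_cover_precover f hf hx g hg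
  have hTf : Triangle.mk (Gc.tw.fmor 0) f (E.inv ≫ Gc.tw.hmor 0) ∈ distTriang C := by
    refine isomorphic_distinguished _ (Gc.tw.mem 0 (Nat.succ_pos m)) _ ?_
    refine Triangle.isoMk _ _ (Iso.refl _) (Iso.refl _) E.symm ?_ ?_ ?_
    · simp [Triangle.mk]
    · simp [hfdef, Triangle.mk]
    · simp [Triangle.mk]
  have hsum : Triangle.mk (biprod.map (Gc.tw.fmor 0) (𝟙 z)) (biprod.map f (0 : z ⟶ 0))
      (biprod.desc ((E.inv ≫ Gc.tw.hmor 0) ≫ (shiftFunctor C (1 : ℤ)).map biprod.inl)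
        ((0 : (0 : C) ⟶ z⟦(1 : ℤ)⟧) ≫ (shiftFunctor C (1 : ℤ)).map biprod.inr)) ∈ distTriang C :=
    biprodTriangle_dist _ _ hTf (contractible_distinguished z)
  have hT'' : Triangle.mk (biprod.map (Gc.tw.fmor 0) (𝟙 z)) (biprod.desc f 0)
      (E.inv ≫ Gc.tw.hmor 0 ≫ (shiftFunctor C (1 : ℤ)).map biprod.inl) ∈ distTriang C := by
    refine isomorphic_distinguished _ hsum _ ?_
    refine Triangle.isoMk _ _ (Iso.refl _) (Iso.refl _) (isoBiprodZero (isZero_zero C)) ?_ ?_ ?_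
    · simp [contractibleTriangle, Triangle.mk]
    · apply biprod.hom_ext' <;> simp [contractibleTriangle, isoBiprodZero, Triangle.mk]
    · simp [contractibleTriangle, isoBiprodZero, Triangle.mk]
  obtain ⟨ι⟩ := iso_obj₁ htri hT'' ψ (Iso.refl c) (by simpa [Triangle.mk] using hψ.symm)
  exact ⟨z, hz, ⟨ψ⟩, ⟨ι⟩⟩

lemma lemB0 {t : C} {G : Type*} [AddCommGroup G] {cls : C → G}
    (hcls : IsAddOn {x : C | inAdd t x} cls)
    {q : ℕ} {y x c : C} {a : y ⟶ x} {g : x ⟶ c} {δ : c ⟶ y⟦(1 : ℤ)⟧}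
    (htri : Triangle.mk a g δ ∈ distTriang C) (hx : inAdd t x)
    (hg : ∀ s : C, inAdd t s → ∀ u : s ⟶ c, ∃ h : s ⟶ x, h ≫ g = u)
    (Gc : GT t 0 c) (Gy : GT t q y) :
    cls x = Ssum cls q Gy.cobj + Ssum cls 0 Gc.cobj := by
  have ec : Gc.cobj 1 ≅ c := eqToIso (Gc.tw.w_top.symm.trans Gc.tw.w_zero) ≪≫ Gc.base
  have hcT : inAdd t c := inAdd_of_iso ec Gc.top
  obtain ⟨h, hh⟩ := hg c hcT (𝟙 c)
  have hδ0 : δ = 0 := by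
    have h23 : g ≫ δ = 0 := comp_distTriang_mor_zero₂₃ _ htri
    calc δ = (h ≫ g) ≫ δ := by rw [hh, Category.id_comp]
    _ = h ≫ (g ≫ δ) := by rw [Category.assoc]
    _ = 0 := by rw [h23, comp_zero]
  obtain ⟨e, he₁, he₂⟩ := exists_iso_binaryBiproduct_of_distTriang _ htri hδ0
  have hyT : inAdd t y := inAdd_of_retract (biprod.inl ≫ e.inv) (e.hom ≫ biprod.fst)
    (((Category.assoc _ _ _).trans (congrArg (fun k => biprod.inl ≫ k)
      (e.inv_hom_id_assoc biprod.fst))).trans biprod.inl_fst) hx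
  have h1 : cls x = cls y + cls c := by
    rw [cls_eq_of_iso hcls hx (inAdd_biprod hyT hcT) e]
    exact hcls.2 _ _ hyT hcT
  have h2 : Ssum cls q Gy.cobj = cls y := lemC hcls q y Gy hyT
  have h3 : Ssum cls 0 Gc.cobj = cls c := by
    rw [Ssum, Finset.sum_range_one, pow_zero, one_smul]
    exact cls_eq_of_iso hcls Gc.top hcT ec
  rw [h1, h2, h3]

lemma lemB {t : C} {G : Type*} [AddCommGroup G] {cls : C → G}
    (hcls : IsAddOn {x : C | inAdd t x} cls) :
    ∀ (N p q : ℕ), p + q ≤ N → ∀ (y x c : C) (a : y ⟶ x) (g : x ⟶ c) (δ : c ⟶ y⟦(1 : ℤ)⟧),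
      (Triangle.mk a g δ ∈ distTriang C) → inAdd t x →
      (∀ s : C, inAdd t s → ∀ u : s ⟶ c, ∃ h : s ⟶ x, h ≫ g = u) →
      ∀ (Gc : GT t p c) (Gy : GT t q y),
      cls x = Ssum cls q Gy.cobj + Ssum cls p Gc.cobj := by
  intro N
  induction N with
  | zero =>
    intro p q hpq y x c a g δ htri hx hg Gc Gy
    obtain rfl : p = 0 := by omega
    exact lemB0 hcls htri hx hg Gc Gy
  | succ N ih =>
    intro p q hpq y x c a g δ htri hx hg Gc Gy
    match p with
    | 0 => exact lemB0 hcls htri hx hg Gc Gy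
    | 1 =>
      obtain ⟨z, hz, ⟨ψ⟩, ⟨ι⟩⟩ := lemSplit htri hx hg Gc
      have c1T : inAdd t (Gc.cobj 1) := (Gc.covers 0 (by omega)).1
      have hw1T : inAdd t (Gc.tw.w 1) := by rw [Gc.tw.w_top]; exact Gc.top
      have hyT : inAdd t y := inAdd_of_iso ι.symm (inAdd_biprod hw1T hz)
      have h1 : cls x = cls (Gc.cobj 1) + cls z := by
        rw [cls_eq_of_iso hcls hx (inAdd_biprod c1T hz) ψ]
        exact hcls.2 _ _ c1T hz
      have h2 : Ssum cls q Gy.cobj = cls (Gc.tw.w 1) + cls z := by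
        rw [lemC hcls q y Gy hyT]
        rw [cls_eq_of_iso hcls hyT (inAdd_biprod hw1T hz) ι]
        exact hcls.2 _ _ hw1T hz
      have h3 : Ssum cls 1 Gc.cobj = cls (Gc.cobj 1) - cls (Gc.cobj 2) := by
        rw [Ssum_succ cls 0 Gc.cobj Gc.tail.cobj (fun i => rfl)]
        rw [Ssum, Finset.sum_range_one, pow_zero, one_smul]
        rfl
      have h4 : cls (Gc.tw.w 1) = cls (Gc.cobj 2) := by rw [Gc.tw.w_top]
      rw [h1, h2, h3, h4]
      abel
    | (p' + 2) =>
      obtain ⟨z, hz, ⟨ψ⟩, ⟨ι⟩⟩ := lemSplit htri hx hg Gc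
      have c1T : inAdd t (Gc.cobj 1) := (Gc.covers 0 (by omega)).1
      have c2T : inAdd t (Gc.cobj 2) := (Gc.covers 1 (by omega)).1
      have hx₂ : inAdd t (Gc.cobj 2 ⊞ z) := inAdd_biprod c2T hz
      -- the new triangle
      have hsum : Triangle.mk (biprod.map (Gc.tw.fmor 1) (0 : (0 : C) ⟶ z))
          (biprod.map (Gc.tw.gmor 1) (𝟙 z))
          (biprod.desc (Gc.tw.hmor 1 ≫ (shiftFunctor C (1 : ℤ)).map biprod.inl)
            ((0 : z ⟶ (0 : C)⟦(1 : ℤ)⟧) ≫ (shiftFunctor C (1 : ℤ)).map biprod.inr)) ∈ distTriang C :=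
        biprodTriangle_dist _ _ (Gc.tw.mem 1 (by omega)) (dist_zero_id z)
      have hT₃ : Triangle.mk (Gc.tw.fmor 1 ≫ biprod.inl)
          (biprod.map (Gc.tw.gmor 1) (𝟙 z)) (biprod.desc (Gc.tw.hmor 1) 0) ∈ distTriang C := by
        refine isomorphic_distinguished _ hsum _ ?_
        refine Triangle.isoMk _ _ (isoBiprodZero (isZero_zero C)) (Iso.refl _) (Iso.refl _)
          ?_ ?_ ?_
        · simp [isoBiprodZero, Triangle.mk]
        · simp [Triangle.mk]
        · apply biprod.hom_ext' <;> simp [isoBiprodZero, Triangle.mk]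
      have hg₂ : ∀ s : C, inAdd t s → ∀ u : s ⟶ Gc.tw.w 1 ⊞ z,
          ∃ h : s ⟶ Gc.cobj 2 ⊞ z, h ≫ biprod.map (Gc.tw.gmor 1) (𝟙 z) = u := by
        intro s hs u
        obtain ⟨h₁, hh₁⟩ := (Gc.covers 1 (by omega)).2.1 s hs (u ≫ biprod.fst)
        refine ⟨biprod.lift h₁ (u ≫ biprod.snd), ?_⟩
        apply biprod.hom_ext
        · rw [Category.assoc, biprod.map_fst, ← Category.assoc, biprod.lift_fst, hh₁]
        · rw [Category.assoc, biprod.map_snd, ← Category.assoc, biprod.lift_snd,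
            Category.comp_id]
      have IH := ih q p' (by omega) (Gc.tw.w 2) (Gc.cobj 2 ⊞ z) (Gc.tw.w 1 ⊞ z) _ _ _
        hT₃ hx₂ hg₂ (Gy.ofIso ι) Gc.tail.tail
      have h1 : cls x = cls (Gc.cobj 1) + cls z := by
        rw [cls_eq_of_iso hcls hx (inAdd_biprod c1T hz) ψ]
        exact hcls.2 _ _ c1T hz
      have h2 : cls (Gc.cobj 2) + cls z
          = Ssum cls p' Gc.tail.tail.cobj + Ssum cls q Gy.cobj := by
        rw [← hcls.2 _ _ c2T hz]
        exact IH
      have hdec : Ssum cls (p' + 2) Gc.cobj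
          = cls (Gc.cobj 1) - (cls (Gc.cobj 2) - Ssum cls p' Gc.tail.tail.cobj) := by
        rw [Ssum_succ cls (p' + 1) Gc.cobj Gc.tail.cobj (fun i => rfl),
          Ssum_succ cls p' Gc.tail.cobj Gc.tail.tail.cobj (fun i => rfl)]
        rfl
      have h3 : Ssum cls p' Gc.tail.tail.cobj
          = cls (Gc.cobj 2) + cls z - Ssum cls q Gy.cobj := by
        rw [eq_sub_iff_add_eq, ← h2]
      rw [h1, hdec, h3]
      abel

end AuxMain

end Aux

theorem stmt8 (k : Type*) [Field k] [Preadditive C] [CategoryTheory.Linear k C] [HasZeroObject C]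
    [HasShift C ℤ] [∀ n : ℤ, (shiftFunctor C n).Additive] [Pretriangulated C]
    [HasFiniteBiproducts C] [IsIdempotentComplete C]
    [∀ X Y : C, FiniteDimensional k (X ⟶ Y)]
    (n : ℕ) (hn : 2 ≤ n) (t : C) (ht : IsClusterTiltingObj n t)
    {G : Type*} [AddCommGroup G] (cls ind : C → G)
    (hcls : IsAddOn {x : C | inAdd t x} cls)
    (hind : IsIndex n {x : C | inAdd t x} cls ind)
    (c' tc c : C) (α : c' ⟶ tc) (τ : tc ⟶ c) (δ : c ⟶ c'⟦(1 : ℤ)⟧)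
    (htri : Triangle.mk α τ δ ∈ distTriang C) (htc : inAdd t tc)
    (hδ : ∀ g : t ⟶ c, g ≫ δ = 0) :
    cls tc = ind c' + ind c := by
  have h1 : n - 1 + 1 = n := by omega
  obtain ⟨cy, twy, hy0, hycov, hytop, hysum⟩ := hind c'
  obtain ⟨cc, twc, hc0, hccov, hctop, hcsum⟩ := hind c
  let Gy : GT t (n - 1) c' :=
    { cobj := cy, tw := twy, base := eqToIso hy0, covers := hycov,
      top := by rw [h1]; exact hytop }
  let Gc : GT t (n - 1) c :=
    { cobj := cc, tw := twc, base := eqToIso hc0, covers := hccov,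
      top := by rw [h1]; exact hctop }
  have hgy : Gy.cobj = cy := rfl
  have hgc : Gc.cobj = cc := rfl
  have hpre : ∀ s : C, inAdd t s → ∀ u : s ⟶ c, ∃ h : s ⟶ tc, h ≫ τ = u := by
    intro s hs u
    have hu0 : u ≫ δ = 0 := by
      obtain ⟨m, i, r, hir⟩ := hs
      have hr : (r ≫ u) ≫ δ = 0 := by
        apply biproduct.hom_ext'
        intro j
        rw [comp_zero]
        simpa [Category.assoc] using hδ (biproduct.ι (fun _ : Fin m => t) j ≫ r ≫ u)
      calc u ≫ δ = (i ≫ r) ≫ u ≫ δ := by rw [hir, Category.id_comp]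
      _ = i ≫ ((r ≫ u) ≫ δ) := by simp only [Category.assoc]
      _ = 0 := by rw [hr, comp_zero]
    obtain ⟨h, hh⟩ := Triangle.coyoneda_exact₃ _ htri u hu0
    exact ⟨h, hh.symm⟩
  have key := lemB hcls ((n - 1) + (n - 1)) (n - 1) (n - 1) le_rfl c' tc c α τ δ htri htc hpre
    Gc Gy
  have hss : ∀ cobj : ℕ → C,
      Ssum cls (n - 1) cobj = ∑ i ∈ Finset.range n, ((-1 : ℤ) ^ i) • cls (cobj (i + 1)) := by
    intro cobj
    rw [Ssum, h1]
  rw [key, hgy, hgc, hss, hss, ← hysum, ← hcsum]
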